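/- Let h : ℂ → ℂ be an ℝ-linear bijection written h(z) = ς₀·z + ς₁·conj(z), and let H : U → ℂ be a holomorphic function on an open connected set U ⊆ h⁻¹-image domain such that h ∘ H ∘ h⁻¹ is holomorphic on h(U). If ς₀ ≠ 0 and ς₁ ≠ 0, then the derivative H' is real-valued on U, hence constant, and H is affine: H(z) = a·z + b with a ∈ ℝ. -/

import Mathlib

open Complex ContinuousLinearMap

lemma aux_const {f : ℂ → ℂ} {U : Set ℂ} (hU : IsOpen U) (hconn : IsPreconnected U)
    (hf : DifferentiableOn ℂ f U) (hd : ∀ z ∈ U, deriv f z = 0) {z₀ : ℂ} (hz₀ : z₀ ∈ U) :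
    ∀ z ∈ U, f z = f z₀ := by
  have hfa := hf.analyticOnNhd hU
  have hca : AnalyticOnNhd ℂ (fun _ => f z₀) U := fun x _ => analyticAt_const
  obtain ⟨r, hr, hball⟩ := Metric.isOpen_iff.1 hU z₀ hz₀
  have hev : f =ᶠ[nhds z₀] fun _ => f z₀ := by
    filter_upwards [Metric.ball_mem_nhds z₀ hr] with y hy
    refine (convex_ball z₀ r).is_const_of_fderivWithin_eq_zero (hf.mono hball) ?_ hy
      (Metric.mem_ball_self hr)
    intro x hx
    rw [fderivWithin_of_isOpen Metric.isOpen_ball hx]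
    have hda : HasDerivAt f 0 x := by
      have := (hf.differentiableAt (hU.mem_nhds (hball hx))).hasDerivAt
      rwa [hd x (hball hx)] at this
    rw [hda.hasFDerivAt.fderiv]
    ext
    simp
  exact fun z hz => hfa.eqOn_of_preconnected_of_eventuallyEq hca hconn hz₀ hev hz

/-- If `h z = ς₀ z + ς₁ conj z` with `ς₀ ≠ 0 ≠ ς₁`, `g` is a two-sided inverse of `h`,
`H` is holomorphic on an open connected `U` and `h ∘ H ∘ g` is holomorphic on `h '' U`,
then `H'` is real-valued on `U` and `H` is affine `H z = a z + b` with `a` real. -/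
theorem stmt7 (ς₀ ς₁ : ℂ) (hς₀ : ς₀ ≠ 0) (hς₁ : ς₁ ≠ 0)
    (h g : ℂ → ℂ)
    (hform : ∀ z, h z = ς₀ * z + ς₁ * (starRingEnd ℂ) z)
    (hg₁ : Function.LeftInverse g h) (hg₂ : Function.RightInverse g h)
    (U : Set ℂ) (hU : IsOpen U) (hconn : IsPreconnected U)
    (H : ℂ → ℂ) (hH : DifferentiableOn ℂ H U)
    (hcomp : DifferentiableOn ℂ (h ∘ H ∘ g) (h '' U)) :
    (∀ z ∈ U, (deriv H z).im = 0) ∧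
      ∃ a b : ℂ, a.im = 0 ∧ ∀ z ∈ U, H z = a * z + b := by
  set c := starRingEnd ℂ with hc
  obtain ⟨d, hd_def⟩ : ∃ d : ℂ, d = ς₀ * c ς₀ - ς₁ * c ς₁ := ⟨_, rfl⟩
  have hcd : c d = d := by
    simp only [hd_def, map_sub, map_mul, Complex.conj_conj, hc]
    ring
  -- `d ≠ 0`
  have hd : d ≠ 0 := by
    intro h0
    obtain ⟨w, hw⟩ := IsAlgClosed.exists_pow_nat_eq (-(ς₁ * c ς₀)) (n := 2) (by norm_num)
    have hw0 : w ≠ 0 := by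
      intro hz
      rw [hz] at hw
      have h2 : ς₁ * c ς₀ = 0 := by
        have h3 := hw.symm
        rw [show (0:ℂ)^2 = 0 by ring] at h3
        exact neg_eq_zero.mp h3
      rcases mul_eq_zero.mp h2 with h1 | h1
      · exact hς₁ h1
      · exact hς₀ (by simpa [hc] using congrArg (starRingEnd ℂ) h1)
    have hnsq : Complex.normSq w = Complex.normSq ς₀ := by
      have h1 : Complex.normSq w ^ 2 = Complex.normSq ς₀ ^ 2 := by
        have := congrArg Complex.normSq hw
        rw [map_pow] at this
        have hns : Complex.normSq ς₀ = Complex.normSq ς₁ := by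
          have : (Complex.normSq ς₀ : ℂ) = (Complex.normSq ς₁ : ℂ) := by
            rw [← Complex.mul_conj, ← Complex.mul_conj]
            exact sub_eq_zero.mp (show ς₀ * c ς₀ - ς₁ * c ς₁ = 0 by rw [← hd_def]; exact h0)
          exact_mod_cast this
        simp only [hc, Complex.normSq_neg, map_mul, Complex.normSq_conj] at this
        rw [this, hns]; ring
      calc Complex.normSq w = Real.sqrt (Complex.normSq w ^ 2) :=
            (Real.sqrt_sq (Complex.normSq_nonneg w)).symm
        _ = Real.sqrt (Complex.normSq ς₀ ^ 2) := by rw [h1]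
        _ = Complex.normSq ς₀ := Real.sqrt_sq (Complex.normSq_nonneg ς₀)
    -- now h w = 0 and w ≠ 0 contradicts injectivity of h
    have hhw : h w = 0 := by
      have hmul : (ς₀ * w + ς₁ * c w) * w = 0 := by
        have hwc : w * c w = (Complex.normSq ς₀ : ℂ) := by
          rw [Complex.mul_conj, hnsq]
        have hsc : ς₀ * c ς₀ = (Complex.normSq ς₀ : ℂ) := Complex.mul_conj ς₀
        have hw2 : w ^ 2 = -(ς₁ * c ς₀) := hw
        calc (ς₀ * w + ς₁ * c w) * w = ς₀ * w ^ 2 + ς₁ * (w * c w) := by ring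
          _ = ς₀ * (-(ς₁ * c ς₀)) + ς₁ * (Complex.normSq ς₀ : ℂ) := by rw [hw2, hwc]
          _ = -ς₁ * (ς₀ * c ς₀) + ς₁ * (Complex.normSq ς₀ : ℂ) := by ring
          _ = 0 := by rw [hsc]; ring
      have := mul_eq_zero.mp hmul
      rcases this with h1 | h1
      · rw [hform]; exact h1
      · exact absurd h1 hw0
    have h00 : h 0 = 0 := by rw [hform]; simp
    exact hw0 (hg₁.injective (by rw [hhw, h00]))
  -- formula for `g`
  have hgf : ∀ z, g z = (c ς₀ * z - ς₁ * c z) / d := by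
    intro z
    have hcand : h ((c ς₀ * z - ς₁ * c z) / d) = z := by
      rw [hform]
      simp only [hc, map_div₀, map_sub, map_mul, Complex.conj_conj]
      rw [show (starRingEnd ℂ) d = d from hcd]
      field_simp
      linear_combination z * hd_def.symm
    calc g z = g (h ((c ς₀ * z - ς₁ * c z) / d)) := by rw [hcand]
      _ = _ := hg₁ _
  -- the continuous linear maps
  let hL : ℂ →L[ℝ] ℂ := ς₀ • (ContinuousLinearMap.id ℝ ℂ) +
    ς₁ • (Complex.conjCLE : ℂ ≃L[ℝ] ℂ).toContinuousLinearMap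
  have hLapp : ∀ v, hL v = ς₀ * v + ς₁ * c v := by
    intro v
    simp [hL, hc, Complex.conjCLE_apply, smul_eq_mul]
  have hhL : h = ⇑hL := funext fun z => by rw [hform, hLapp]
  let gL : ℂ →L[ℝ] ℂ := (d⁻¹ * c ς₀) • (ContinuousLinearMap.id ℝ ℂ) +
    (-(d⁻¹ * ς₁)) • (Complex.conjCLE : ℂ ≃L[ℝ] ℂ).toContinuousLinearMap
  have gLapp : ∀ v, gL v = d⁻¹ * c ς₀ * v - d⁻¹ * ς₁ * c v := by
    intro v
    simp [gL, hc, Complex.conjCLE_apply, smul_eq_mul]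
    ring
  have hgL : g = ⇑gL := funext fun z => by rw [hgf, gLapp]; field_simp
  -- `h '' U` is open
  have himg : h '' U = g ⁻¹' U := by
    ext w
    constructor
    · rintro ⟨z, hz, rfl⟩
      simpa [hg₁ z] using hz
    · intro hw
      exact ⟨g w, hw, hg₂ w⟩
  have hFopen : IsOpen (h '' U) := by
    rw [himg]
    exact hU.preimage (hgL ▸ gL.continuous)
  -- the key pointwise statement
  have key : ∀ z₀ ∈ U, (deriv H z₀).im = 0 := by
    intro z₀ hz₀
    set a := deriv H z₀ with ha
    have hz₀' : h z₀ ∈ h '' U := ⟨z₀, hz₀, rfl⟩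
    have hFd : DifferentiableAt ℂ (h ∘ H ∘ g) (h z₀) :=
      hcomp.differentiableAt (hFopen.mem_nhds hz₀')
    have hHd : HasFDerivAt H ((ContinuousLinearMap.smulRight (1 : ℂ →L[ℂ] ℂ) a).restrictScalars ℝ) z₀ :=
      ((hH.differentiableAt (hU.mem_nhds hz₀)).hasDerivAt.hasFDerivAt).restrictScalars ℝ
    have hgd : HasFDerivAt g gL (h z₀) := by rw [hgL]; exact gL.hasFDerivAt
    have hg0 : g (h z₀) = z₀ := hg₁ z₀
    have hchain : HasFDerivAt (h ∘ H ∘ g)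
        (hL.comp (((ContinuousLinearMap.smulRight (1 : ℂ →L[ℂ] ℂ) a).restrictScalars ℝ).comp gL))
        (h z₀) := by
      have c1 : HasFDerivAt (H ∘ g)
          (((ContinuousLinearMap.smulRight (1 : ℂ →L[ℂ] ℂ) a).restrictScalars ℝ).comp gL)
          (h z₀) := by
        have hHd' : HasFDerivAt H
            ((ContinuousLinearMap.smulRight (1 : ℂ →L[ℂ] ℂ) a).restrictScalars ℝ) (g (h z₀)) := by
          rw [hg0]; exact hHd
        exact HasFDerivAt.comp _ hHd' hgd
      have c2 : HasFDerivAt h hL ((H ∘ g) (h z₀)) := by rw [hhL]; exact hL.hasFDerivAt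
      exact c2.comp _ c1
    have hCR := hFd.hasFDerivAt.restrictScalars ℝ
    have huniq := hchain.unique hCR
    have happ : ∀ v, hL (gL v * a) = (fderiv ℂ (h ∘ H ∘ g) (h z₀)).restrictScalars ℝ v := by
      intro v
      rw [← huniq]
      simp [ContinuousLinearMap.smulRight_apply, smul_eq_mul]
    have E : hL (gL Complex.I * a) = Complex.I * hL (gL 1 * a) := by
      rw [happ, happ]
      have : (Complex.I : ℂ) = Complex.I • (1 : ℂ) := by simp
      calc (fderiv ℂ (h ∘ H ∘ g) (h z₀)).restrictScalars ℝ Complex.I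
          = (fderiv ℂ (h ∘ H ∘ g) (h z₀)) (Complex.I • (1:ℂ)) := by
            simp [ContinuousLinearMap.coe_restrictScalars']
        _ = Complex.I • (fderiv ℂ (h ∘ H ∘ g) (h z₀)) 1 := map_smul _ _ _
        _ = Complex.I * (fderiv ℂ (h ∘ H ∘ g) (h z₀)).restrictScalars ℝ 1 := by
            simp [ContinuousLinearMap.coe_restrictScalars', smul_eq_mul]
    rw [gLapp, gLapp, hLapp, hLapp] at E
    simp only [hc, map_sub, map_mul, map_neg, map_inv₀, Complex.conj_conj, Complex.conj_I,
      map_one] at E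
    rw [show (starRingEnd ℂ) d = d from hcd] at E
    have hkey : ς₀ * ς₁ * (c a - a) = 0 := by
      field_simp at E
      have h5 : d ^ 3 * (2 * Complex.I) * (ς₀ * ς₁ * (a - c a)) = 0 := by
        rw [hc]
        linear_combination (d ^ 3 * Complex.I) * E
      have h6 := (mul_eq_zero.mp h5).resolve_left
        (mul_ne_zero (pow_ne_zero 3 hd) (mul_ne_zero two_ne_zero Complex.I_ne_zero))
      linear_combination -h6
    have : c a = a := by
      have h2 := (mul_eq_zero.mp hkey).resolve_left (mul_ne_zero hς₀ hς₁)
      exact sub_eq_zero.mp h2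
    exact (Complex.conj_eq_iff_im.mp this)
  refine ⟨key, ?_⟩
  rcases Set.eq_empty_or_nonempty U with hUe | ⟨z₀, hz₀⟩
  · exact ⟨0, 0, by simp, fun z hz => absurd (hUe ▸ hz) (Set.notMem_empty z)⟩
  · have hHa := hH.analyticOnNhd hU
    have hH' : DifferentiableOn ℂ (deriv H) U := (hHa.deriv).differentiableOn
    have hzero : ∀ z ∈ U, deriv (deriv H) z = 0 := by
      intro z hz
      set b := deriv (deriv H) z with hb
      have hdH : HasDerivAt (deriv H) b z := (hH'.differentiableAt (hU.mem_nhds hz)).hasDerivAt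
      have hF := hdH.hasFDerivAt.restrictScalars ℝ
      have h1 : HasFDerivAt (fun w => (deriv H w).im)
          (Complex.imCLM.comp ((ContinuousLinearMap.smulRight (1 : ℂ →L[ℂ] ℂ) b).restrictScalars ℝ)) z :=
        (Complex.imCLM.hasFDerivAt).comp z hF
      have h2 : HasFDerivAt (fun w => (deriv H w).im) (0 : ℂ →L[ℝ] ℝ) z := by
        have h0 : HasFDerivAt (fun _ : ℂ => (0 : ℝ)) (0 : ℂ →L[ℝ] ℝ) z := hasFDerivAt_const _ _
        apply h0.congr_of_eventuallyEq
        filter_upwards [hU.mem_nhds hz] with w hw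
        exact (key w hw)
      have h3 := h1.unique h2
      have e1 : b.im = 0 := by
        have := congrFun (congrArg DFunLike.coe h3) 1
        simpa using this
      have e2 : b.re = 0 := by
        have := congrFun (congrArg DFunLike.coe h3) Complex.I
        simpa [Complex.mul_im] using this
      exact Complex.ext e2 e1
    have hconst := aux_const hU hconn hH' hzero hz₀
    set a := deriv H z₀ with ha
    refine ⟨a, H z₀ - a * z₀, key z₀ hz₀, ?_⟩
    have hsub : DifferentiableOn ℂ (fun z => H z - a * z) U :=
      hH.sub ((differentiable_id.const_mul a).differentiableOn)
    have hdz : ∀ z ∈ U, deriv (fun z => H z - a * z) z = 0 := by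
      intro z hz
      have hHz : DifferentiableAt ℂ H z := hH.differentiableAt (hU.mem_nhds hz)
      have hAz : DifferentiableAt ℂ (fun z : ℂ => a * z) z := differentiableAt_id.const_mul a
      have hda' : HasDerivAt (fun w : ℂ => a * w) a z := by
        simpa using (hasDerivAt_id z).const_mul a
      rw [deriv_fun_sub hHz hAz, hconst z hz, hda'.deriv, sub_self]
    have := aux_const hU hconn hsub hdz hz₀
    intro z hz
    have h4 := this z hz
    linear_combination h4
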